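/- For $n$ i.i.d. uniform $[0,1]$ random variables, the probability that the sum of the two smallest order statistics exceeds $1$ equals $\frac{1}{2^{n-1}}$. -/

import Mathlib

open MeasureTheory Set

lemma hyperplane_null' {n : ℕ} (i j : Fin n) (h : i ≠ j) :
    volume {x : Fin n → ℝ | x i = x j} = 0 := by
  have heq : {x : Fin n → ℝ | x i = x j} =
      (LinearMap.ker ((LinearMap.proj i : (Fin n → ℝ) →ₗ[ℝ] ℝ) - LinearMap.proj j) : Set _) := by
    ext x; simp [LinearMap.mem_ker, sub_eq_zero]
  rw [heq]
  apply Measure.addHaar_submodule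
  intro htop
  have h1 := (Submodule.eq_top_iff'.mp htop) (Pi.single i 1)
  simp [LinearMap.mem_ker, Pi.single_eq_of_ne h.symm] at h1


lemma slice_vol (m : ℕ) (t : ℝ) (ht : t ∈ Set.Icc (0:ℝ) 1) :
    volume {y : Fin m → ℝ | ∀ j, y j ∈ Set.Ioc (max t (1-t)) 1}
      = ENNReal.ofReal (min t (1-t) ^ m) := by
  have : {y : Fin m → ℝ | ∀ j, y j ∈ Set.Ioc (max t (1-t)) 1}
      = Set.pi Set.univ (fun _ => Set.Ioc (max t (1-t)) 1) := by
    ext y; simp [Set.mem_pi]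
  rw [this, volume_pi_pi]
  have h1 : (1:ℝ) - max t (1-t) = min t (1-t) := by
    rcases le_total t (1-t) with h | h <;> simp [max_eq_left, max_eq_right, min_eq_left, min_eq_right, h]
  have h2 : 0 ≤ min t (1-t) := le_min ht.1 (by linarith [ht.2])
  simp [Real.volume_Ioc, h1, Finset.prod_const, ← ENNReal.ofReal_pow h2]
  rw [ENNReal.ofReal_pow h2, ENNReal.ofReal_min]

lemma key_integral (m : ℕ) :
    ∫ t in (0:ℝ)..1, min t (1-t) ^ m = (1/2)^m / (m+1) := by
  have hsplit : ∫ t in (0:ℝ)..1, min t (1-t) ^ m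
      = (∫ t in (0:ℝ)..(1/2), min t (1-t) ^ m) + ∫ t in (1/2:ℝ)..1, min t (1-t) ^ m := by
    rw [intervalIntegral.integral_add_adjacent_intervals] <;>
      exact (Continuous.pow (continuous_id.min (by continuity)) m).intervalIntegrable _ _
  have h1 : ∫ t in (0:ℝ)..(1/2), min t (1-t) ^ m = ∫ t in (0:ℝ)..(1/2), t ^ m := by
    apply intervalIntegral.integral_congr
    intro x hx
    rw [Set.uIcc_of_le (by norm_num)] at hx
    have : x ≤ 1 - x := by cases hx; linarith
    simp [min_eq_left this]
  have h2 : ∫ t in (1/2:ℝ)..1, min t (1-t) ^ m = ∫ t in (1/2:ℝ)..1, (1-t) ^ m := by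
    apply intervalIntegral.integral_congr
    intro x hx
    rw [Set.uIcc_of_le (by norm_num)] at hx
    have : 1 - x ≤ x := by cases hx; linarith
    simp [min_eq_right this]
  have h3 : ∫ t in (1/2:ℝ)..1, (1-t) ^ m = ∫ t in (0:ℝ)..(1/2), t ^ m := by
    have := intervalIntegral.integral_comp_sub_left (a := 1/2) (b := 1) (fun x => x ^ m) 1
    norm_num at this ⊢
    exact this
  rw [hsplit, h1, h2, h3, integral_pow]
  norm_num
  ring

lemma vol_S' (m : ℕ) (i : Fin (m+1)) :
    volume {x : Fin (m+1) → ℝ | x i ∈ Set.Icc (0:ℝ) 1 ∧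
        ∀ j, j ≠ i → x j ∈ Set.Ioc (max (x i) (1 - x i)) 1}
      = ENNReal.ofReal ((1/2)^m / (m+1)) := by
  set B : Set (ℝ × (Fin m → ℝ)) :=
    {p | p.1 ∈ Set.Icc (0:ℝ) 1 ∧ ∀ j, p.2 j ∈ Set.Ioc (max p.1 (1 - p.1)) 1} with hBdef
  have hB : MeasurableSet B := by
    have hBeq : B = (Prod.fst ⁻¹' Set.Icc (0:ℝ) 1)
        ∩ ⋂ j, ({p : ℝ × (Fin m → ℝ) | max p.1 (1 - p.1) < p.2 j} ∩ {p | p.2 j ≤ 1}) := by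
      ext p; simp [hBdef, Set.mem_iInter, forall_and]
    rw [hBeq]
    refine MeasurableSet.inter (measurable_fst measurableSet_Icc) ?_
    refine MeasurableSet.iInter fun j => MeasurableSet.inter ?_ ?_
    · exact measurableSet_lt (measurable_fst.max (measurable_const.sub measurable_fst))
        (measurable_snd.eval (a := j))
    · exact measurableSet_le (measurable_snd.eval (a := j)) measurable_const
  have hpre : {x : Fin (m+1) → ℝ | x i ∈ Set.Icc (0:ℝ) 1 ∧
        ∀ j, j ≠ i → x j ∈ Set.Ioc (max (x i) (1 - x i)) 1}
      = (MeasurableEquiv.piFinSuccAbove (fun _ => ℝ) i) ⁻¹' B := by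
    ext x
    simp only [Set.mem_preimage, hBdef, Set.mem_setOf_eq]
    constructor
    · rintro ⟨h1, h2⟩
      exact ⟨h1, fun j => h2 _ (i.succAbove_ne j)⟩
    · rintro ⟨h1, h2⟩
      refine ⟨h1, fun j hj => ?_⟩
      obtain ⟨k, rfl⟩ := Fin.exists_succAbove_eq hj
      exact h2 k
  have hmp := measurePreserving_piFinSuccAbove (fun _ : Fin (m+1) => (volume : Measure ℝ)) i
  rw [hpre]
  have hthis := hmp.measure_preimage hB.nullMeasurableSet
  rw [show (Measure.pi fun _ : Fin (m+1) => (volume : Measure ℝ)) = volume from volume_pi.symm] at hthis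
  rw [hthis, Measure.prod_apply hB]
  have hslice : ∀ t : ℝ, (Measure.pi fun _ : Fin m => (volume : Measure ℝ)) (Prod.mk t ⁻¹' B)
      = Set.indicator (Set.Icc (0:ℝ) 1) (fun t => ENNReal.ofReal (min t (1-t) ^ m)) t := by
    intro t
    rw [show (Measure.pi fun _ : Fin m => (volume : Measure ℝ)) = volume from volume_pi.symm]
    by_cases ht : t ∈ Set.Icc (0:ℝ) 1
    · have : Prod.mk t ⁻¹' B = {y : Fin m → ℝ | ∀ j, y j ∈ Set.Ioc (max t (1-t)) 1} := by
        ext y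
        simp only [hBdef, Set.mem_preimage, Set.mem_setOf_eq]
        exact and_iff_right ht
      rw [this, slice_vol m t ht, Set.indicator_of_mem ht]
    · have : Prod.mk t ⁻¹' B = ∅ := by
        ext y
        simp only [hBdef, Set.mem_preimage, Set.mem_setOf_eq, Set.mem_empty_iff_false, iff_false]
        exact fun h => ht h.1
      rw [this, Set.indicator_of_notMem ht, measure_empty]
  rw [lintegral_congr hslice, lintegral_indicator measurableSet_Icc]
  have hnn : 0 ≤ᶠ[ae (volume.restrict (Set.Icc (0:ℝ) 1))] fun t => min t (1-t) ^ m := by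
    filter_upwards [ae_restrict_mem measurableSet_Icc] with t ht
    exact pow_nonneg (le_min ht.1 (by linarith [ht.2])) m
  have hint : Integrable (fun t => min t (1-t) ^ m) (volume.restrict (Set.Icc (0:ℝ) 1)) := by
    apply ContinuousOn.integrableOn_compact isCompact_Icc
    exact ((continuous_id.min (by continuity)).pow m).continuousOn
  rw [← ofReal_integral_eq_lintegral_ofReal hint hnn]
  congr 1
  rw [MeasureTheory.integral_Icc_eq_integral_Ioc,
    ← intervalIntegral.integral_of_le (by norm_num : (0:ℝ) ≤ 1), key_integral]

lemma mS' (m : ℕ) (i : Fin (m+1)) :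
    MeasurableSet {x : Fin (m+1) → ℝ | x i ∈ Set.Icc (0:ℝ) 1 ∧
        ∀ j, j ≠ i → x j ∈ Set.Ioc (max (x i) (1 - x i)) 1} := by
  have hBeq : {x : Fin (m+1) → ℝ | x i ∈ Set.Icc (0:ℝ) 1 ∧
        ∀ j, j ≠ i → x j ∈ Set.Ioc (max (x i) (1 - x i)) 1}
      = ((fun x : Fin (m+1) → ℝ => x i) ⁻¹' Set.Icc (0:ℝ) 1)
        ∩ ⋂ j ∈ ({j | j ≠ i} : Set (Fin (m+1))),
            ({x : Fin (m+1) → ℝ | max (x i) (1 - x i) < x j} ∩ {x | x j ≤ 1}) := by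
    ext x
    simp only [Set.mem_inter_iff, Set.mem_preimage, Set.mem_setOf_eq, Set.mem_iInter]
    constructor
    · rintro ⟨h1, h2⟩
      exact ⟨h1, fun j hj => ⟨(h2 j hj).1, (h2 j hj).2⟩⟩
    · rintro ⟨h1, h2⟩
      exact ⟨h1, fun j hj => ⟨(h2 j hj).1, (h2 j hj).2⟩⟩
  rw [hBeq]
  refine MeasurableSet.inter ((measurable_pi_apply i) measurableSet_Icc) ?_
  refine MeasurableSet.biInter (Set.to_countable _) fun j _ => MeasurableSet.inter ?_ ?_
  · exact measurableSet_lt ((measurable_pi_apply i).max (measurable_const.sub (measurable_pi_apply i)))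
      (measurable_pi_apply j)
  · exact measurableSet_le (measurable_pi_apply j) measurable_const

theorem two_smallest_order_statistics_sum_gt_one (n : ℕ) (hn : 2 ≤ n) :
    volume {x : Fin n → ℝ | (∀ i, x i ∈ Set.Icc (0 : ℝ) 1) ∧
        ∀ i j, i ≠ j → (1 : ℝ) < x i + x j}
      = ((2 : ENNReal) ^ (n - 1))⁻¹ := by
  obtain ⟨m, rfl⟩ : ∃ m, n = m + 1 := ⟨n - 1, by omega⟩
  set T : Set (Fin (m+1) → ℝ) := {x | (∀ i, x i ∈ Set.Icc (0 : ℝ) 1) ∧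
        ∀ i j, i ≠ j → (1 : ℝ) < x i + x j} with hT
  set S : Fin (m+1) → Set (Fin (m+1) → ℝ) := fun i =>
    {x | x i ∈ Set.Icc (0:ℝ) 1 ∧ ∀ j, j ≠ i → x j ∈ Set.Ioc (max (x i) (1 - x i)) 1} with hS
  set N : Set (Fin (m+1) → ℝ) := ⋃ i, ⋃ j, ⋃ (_ : i ≠ j), {x | x i = x j} with hN
  have hNnull : volume N = 0 := by
    refine measure_iUnion_null fun i => measure_iUnion_null fun j => measure_iUnion_null fun h =>
      hyperplane_null' i j h
  -- S i ⊆ T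
  have hmaxhalf : ∀ a : ℝ, (1:ℝ)/2 ≤ max a (1-a) := by
    intro a
    rcases le_total a (1/2) with h | h
    · exact le_max_of_le_right (by linarith)
    · exact le_max_of_le_left h
  have hsub : ∀ i, S i ⊆ T := by
    intro i x hx
    obtain ⟨hi, hrest⟩ := hx
    constructor
    · intro k
      by_cases hk : k = i
      · exact hk ▸ hi
      · have := hrest k hk
        exact ⟨le_of_lt (lt_of_lt_of_le (by linarith [hmaxhalf (x i)]) this.1.le), this.2⟩
    · intro k l hkl
      by_cases hk : k = i
      · subst hk
        have := (hrest l (Ne.symm hkl)).1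
        have h2 : 1 - x k < x l := lt_of_le_of_lt (le_max_right _ _) this
        linarith
      · by_cases hl : l = i
        · subst hl
          have := (hrest k hk).1
          have h2 : 1 - x l < x k := lt_of_le_of_lt (le_max_right _ _) this
          linarith
        · have h1 := (hrest k hk).1
          have h2 := (hrest l hl).1
          have := hmaxhalf (x i)
          linarith
  -- disjoint
  have hdisj : Pairwise (Function.onFun Disjoint S) := by
    intro i j hij
    rw [Function.onFun, Set.disjoint_left]
    intro x hxi hxj
    have h1 : x i < x j := lt_of_le_of_lt (le_max_left _ _) (hxi.2 j (Ne.symm hij)).1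
    have h2 : x j < x i := lt_of_le_of_lt (le_max_left _ _) (hxj.2 i hij).1
    linarith
  -- cover
  have hcover : T ⊆ (⋃ i, S i) ∪ N := by
    intro x hx
    by_cases hxN : x ∈ N
    · exact Or.inr hxN
    · left
      have hinj : ∀ i j, i ≠ j → x i ≠ x j := by
        intro i j hij heq
        exact hxN (Set.mem_iUnion.mpr ⟨i, Set.mem_iUnion.mpr ⟨j, Set.mem_iUnion.mpr ⟨hij, heq⟩⟩⟩)
      obtain ⟨i, hi⟩ := Finite.exists_min x
      refine Set.mem_iUnion.mpr ⟨i, hx.1 i, fun j hj => ?_⟩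
      have hlt : x i < x j := lt_of_le_of_ne (hi j) (hinj i j (Ne.symm hj))
      have hsum := hx.2 i j (Ne.symm hj)
      exact ⟨max_lt hlt (by linarith), (hx.1 j).2⟩
  -- compute
  have hUT : T = (⋃ i, S i) ∪ (T ∩ N) := by
    apply Set.Subset.antisymm
    · intro x hx
      rcases hcover hx with h | h
      · exact Or.inl h
      · exact Or.inr ⟨hx, h⟩
    · rintro x (h | h)
      · exact hsub _ (Set.mem_iUnion.mp h).choose_spec
      · exact h.1
  have hvolU : volume (⋃ i, S i) = (m+1) * ENNReal.ofReal ((1/2)^m / (m+1)) := by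
    rw [measure_iUnion hdisj (fun i => mS' m i), tsum_fintype]
    have hv : ∀ i : Fin (m+1), volume (S i) = ENNReal.ofReal ((1/2)^m / (m+1)) :=
      fun i => vol_S' m i
    simp only [hv, Finset.sum_const, Finset.card_univ, Fintype.card_fin, nsmul_eq_mul]
    push_cast
    ring_nf
  have hvolT : volume T = (m+1) * ENNReal.ofReal ((1/2)^m / (m+1)) := by
    rw [hUT]
    refine le_antisymm ?_ ?_
    · calc volume ((⋃ i, S i) ∪ (T ∩ N)) ≤ volume (⋃ i, S i) + volume (T ∩ N) := measure_union_le _ _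
        _ ≤ volume (⋃ i, S i) + volume N := by gcongr; exact Set.inter_subset_right
        _ = (m+1) * ENNReal.ofReal ((1/2)^m / (m+1)) := by rw [hNnull, add_zero, hvolU]
    · rw [← hvolU]; exact measure_mono Set.subset_union_left
  rw [hvolT, Nat.add_sub_cancel]
  have hcast : ((m:ENNReal) + 1) = ENNReal.ofReal ((m:ℝ)+1) := by
    rw [ENNReal.ofReal_add (by positivity) zero_le_one, ENNReal.ofReal_natCast, ENNReal.ofReal_one]
  rw [hcast, ← ENNReal.ofReal_mul (by positivity)]
  have heq2 : ((m:ℝ)+1) * ((1/2)^m / ((m:ℝ)+1)) = (1/2)^m := by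
    field_simp
  rw [heq2, show ((1:ℝ)/2)^m = ((2:ℝ)⁻¹)^m by norm_num,
    ENNReal.ofReal_pow (by norm_num), ENNReal.ofReal_inv_of_pos (by norm_num),
    ← ENNReal.inv_pow]
  norm_num
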